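/- Let q be a positive composite number and let p be a prime that does not divide q. Then the binomial coefficient C(q + p - 1, q - 1) is congruent to 0 modulo q. -/

import Mathlib

theorem composite_binom_cong_zero_of_not_dvd (q p : ℕ) (hq : 1 < q) (hq' : ¬ q.Prime)
    (hp : p.Prime) (hpq : ¬ p ∣ q) :
    (q + p - 1).choose (q - 1) ≡ 0 [MOD q] := by
  have hp2 := hp.two_le
  rw [Nat.modEq_zero_iff_dvd]
  have key := Nat.add_one_mul_choose_eq (q + p - 1) (q - 1)
  have h1 : q + p - 1 + 1 = q + p := by omega
  have h2 : q - 1 + 1 = q := by omega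
  rw [h1, h2] at key
  have hc : Nat.Coprime q p := (hp.coprime_iff_not_dvd.mpr hpq).symm
  have hcop : Nat.Coprime q (q + p) := by
    simpa [Nat.coprime_add_self_left] using hc
  have hdvd : q ∣ (q + p) * (q + p - 1).choose (q - 1) := by
    rw [key]; exact Dvd.intro_left _ rfl
  exact hcop.dvd_of_dvd_mul_left hdvd
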